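/- Let F₁ ≠ F₂ be points in the Euclidean plane and let A, B, X form a linkage configuration (dist F₁ A = dist F₂ B = dist F₁ F₂ / √2, dist A B = dist F₁ F₂, A and B strictly on opposite sides of line F₁F₂, X the midpoint of AB). Suppose the lines F₁A and F₂B meet in a point P. Then the four points P, F₁, X, F₂ are concyclic (the quadrilateral PF₁XF₂ is inscribed in a circle). -/

import Mathlib

open EuclideanGeometry Real

section helpers

lemma linkage_dsq (x y : EuclideanSpace ℝ (Fin 2)) :
    dist x y ^ 2 = (x 0 - y 0)^2 + (x 1 - y 1)^2 := by
  rw [EuclideanSpace.dist_eq, Real.sq_sqrt (by positivity)]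
  simp [Fin.sum_univ_two, Real.dist_eq, sq_abs]

lemma linkage_eq_of_sq (x y : ℝ) (hx : 0 ≤ x) (hy : 0 ≤ y) (h : x^2 = y^2) : x = y := by
  nlinarith


/-- Core algebraic lemma. -/
lemma linkage_core (w1 w2 u1 u2 v1 v2 t s : ℝ)
    (e1 : u1^2 + u2^2 = (w1^2 + w2^2)/2)
    (e2 : v1^2 + v2^2 = (w1^2 + w2^2)/2)
    (e3 : (w1+v1-u1)^2 + (w2+v2-u2)^2 = w1^2 + w2^2)
    (ha : w1*u2 - w2*u1 ≠ 0)
    (hb : w1*v2 - w2*v1 ≠ 0)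
    (hab : (w1*u2 - w2*u1) * (w1*v2 - w2*v1) < 0)
    (hsv1 : t*u1 - w1 = s*v1) (hsv2 : t*u2 - w2 = s*v2) :
    ∃ k : ℝ,
      ((w1/2 - k*w2 - w1)^2 + (w2/2 + k*w1 - w2)^2 = (w1/2 - k*w2)^2 + (w2/2 + k*w1)^2)
      ∧ ((w1/2 - k*w2 - t*u1)^2 + (w2/2 + k*w1 - t*u2)^2
          = (w1/2 - k*w2)^2 + (w2/2 + k*w1)^2)
      ∧ ((w1/2 - k*w2 - (u1+v1+w1)/2)^2 + (w2/2 + k*w1 - (u2+v2+w2)/2)^2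
          = (w1/2 - k*w2)^2 + (w2/2 + k*w1)^2) := by
  have ht : t ≠ 0 := by
    intro h0
    apply hb
    linear_combination (-v2)*hsv1 + v1*hsv2 + (u1*v2 - u2*v1)*h0
  -- key fact K : u1*v2 - u2*v1 = (w1*u2-w2*u1) + (w1*v2-w2*v1)
  have hdd : (v1-u1)*((v1-u1)+2*w1) + (v2-u2)*((v2-u2)+2*w2) = 0 := by
    linear_combination e3
  have hduv : (v1-u1)*(u1+v1) + (v2-u2)*(u2+v2) = 0 := by linear_combination e2 - e1
  have hK : u1*v2 - u2*v1 = (w1*u2 - w2*u1) + (w1*v2 - w2*v1) := by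
    by_cases hd : v1 = u1 ∧ v2 = u2
    · exfalso
      obtain ⟨h1, h2⟩ := hd
      have hba : w1*v2 - w2*v1 = w1*u2 - w2*u1 := by rw [h1, h2]
      rw [hba] at hab
      nlinarith [sq_nonneg (w1*u2 - w2*u1)]
    · have hne : v1 - u1 ≠ 0 ∨ v2 - u2 ≠ 0 := by
        by_contra hc
        push_neg at hc
        exact hd ⟨by linarith [sub_eq_zero.mp hc.1], by linarith [sub_eq_zero.mp hc.2]⟩
      have hpos : 0 < (v1-u1)^2 + (v2-u2)^2 := by
        rcases hne with h | h
        · have := mul_self_pos.mpr h; nlinarith [sq_nonneg (v2-u2)]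
        · have := mul_self_pos.mpr h; nlinarith [sq_nonneg (v1-u1)]
      have hK0 : ((u1*v2 - u2*v1) - ((w1*u2 - w2*u1) + (w1*v2 - w2*v1)))
          * ((v1-u1)^2 + (v2-u2)^2) = 0 := by
        linear_combination (-(((v1-u1)*(u2+v2) - (v2-u2)*(u1+v1))/2))*hdd
          + ((v1-u1)*w2 - (v2-u2)*w1)*hduv
      rcases mul_eq_zero.mp hK0 with h | h
      · linarith [sub_eq_zero.mp h]
      · exact absurd h (ne_of_gt hpos)
  have hC : t*(u1*v2 - u2*v1) = w1*v2 - w2*v1 := by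
    linear_combination v2*hsv1 - v1*hsv2
  have hgam : (u1*v1+u2*v2)*(w1*u2-w2*u1)
      = (t*(u1^2+u2^2)-(w1*u1+w2*u2))*(u1*v2-u2*v1) := by
    linear_combination (-(u1^2+u2^2))*hC
  obtain ⟨k, hk⟩ : ∃ k : ℝ, k*(2*(w1*u2 - w2*u1)) = t*(u1^2+u2^2) - (w1*u1+w2*u2) :=
    ⟨(t*(u1^2+u2^2) - (w1*u1+w2*u2))/(2*(w1*u2 - w2*u1)), by rw [div_mul_cancel₀]; exact mul_ne_zero two_ne_zero ha⟩
  refine ⟨k, ?_, ?_, ?_⟩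
  · ring
  · linear_combination (-t)*hk
  · have h5 : (w1*u2-w2*u1) * (2*k*(u1*v2-u2*v1) - (u1*v1+u2*v2)) = 0 := by
      linear_combination (u1*v2-u2*v1)*hk - hgam
    have hkg : 2*k*(u1*v2-u2*v1) = u1*v1+u2*v2 := by
      rcases mul_eq_zero.mp h5 with h | h
      · exact absurd h ha
      · linarith [sub_eq_zero.mp h]
    have hkab : 2*k*((w1*u2-w2*u1)+(w1*v2-w2*v1)) = u1*v1+u2*v2 := by
      linear_combination hkg - 2*k*hK
    linear_combination (1/4)*e1 + (1/4)*e2 - (1/2)*hkab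

lemma linkage_mem_pair {p₁ p₂ p : EuclideanSpace ℝ (Fin 2)}
    (h : p ∈ affineSpan ℝ ({p₁, p₂} : Set (EuclideanSpace ℝ (Fin 2)))) :
    ∃ r : ℝ, ∀ i, p i - p₁ i = r * (p₂ i - p₁ i) := by
  have h' : (p -ᵥ p₁) +ᵥ p₁ ∈ affineSpan ℝ ({p₁, p₂} : Set (EuclideanSpace ℝ (Fin 2))) := by
    rwa [vsub_vadd]
  obtain ⟨r, hr⟩ := vadd_left_mem_affineSpan_pair.mp h'
  refine ⟨r, fun i => ?_⟩
  have := congrArg (fun v => v i) hr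
  simpa [vsub_eq_sub, PiLp.sub_apply, PiLp.smul_apply, smul_eq_mul] using this.symm

lemma linkage_mem_pair' {p₁ p₂ p : EuclideanSpace ℝ (Fin 2)}
    (h : ∃ r : ℝ, ∀ i, p i - p₁ i = r * (p₂ i - p₁ i)) :
    p ∈ affineSpan ℝ ({p₁, p₂} : Set (EuclideanSpace ℝ (Fin 2))) := by
  obtain ⟨r, hr⟩ := h
  have : p = AffineMap.lineMap p₁ p₂ r := by
    ext i
    have := hr i
    simp only [AffineMap.lineMap_apply, vsub_eq_sub, vadd_eq_add, PiLp.add_apply,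
      PiLp.sub_apply, PiLp.smul_apply, smul_eq_mul]
    linarith
  rw [this]
  exact AffineMap.lineMap_mem_affineSpan_pair _ _ _

end helpers

set_option maxHeartbeats 2000000 in
/-- In the linkage configuration, if the lines `F₁A` and `F₂B` meet at `P`, then the
quadrilateral `PF₁XF₂` is inscribed in a circle: `P`, `F₁`, `X`, `F₂` are concyclic. -/
theorem linkage_concyclic
    (F₁ F₂ A B X P : EuclideanSpace ℝ (Fin 2))
    (hF : F₁ ≠ F₂)
    (hA : dist F₁ A = dist F₁ F₂ / Real.sqrt 2)
    (hB : dist F₂ B = dist F₁ F₂ / Real.sqrt 2)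
    (hAB : dist A B = dist F₁ F₂)
    (hSide : (affineSpan ℝ ({F₁, F₂} : Set (EuclideanSpace ℝ (Fin 2)))).SOppSide A B)
    (hX : X = midpoint ℝ A B)
    (hP₁ : P ∈ affineSpan ℝ ({F₁, A} : Set (EuclideanSpace ℝ (Fin 2))))
    (hP₂ : P ∈ affineSpan ℝ ({F₂, B} : Set (EuclideanSpace ℝ (Fin 2)))) :
    EuclideanGeometry.Concyclic ({P, F₁, X, F₂} : Set (EuclideanSpace ℝ (Fin 2))) := by
  -- squared distance hypotheses in coordinates
  have e1 : (A 0 - F₁ 0)^2 + (A 1 - F₁ 1)^2 = ((F₂ 0 - F₁ 0)^2 + (F₂ 1 - F₁ 1)^2)/2 := by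
    have h' : dist F₁ A ^ 2 = dist F₁ F₂ ^ 2 / 2 := by
      rw [hA, div_pow, Real.sq_sqrt (by norm_num : (0:ℝ) ≤ 2)]
    rw [linkage_dsq, linkage_dsq] at h'
    linear_combination h'
  have e2 : (B 0 - F₂ 0)^2 + (B 1 - F₂ 1)^2 = ((F₂ 0 - F₁ 0)^2 + (F₂ 1 - F₁ 1)^2)/2 := by
    have h' : dist F₂ B ^ 2 = dist F₁ F₂ ^ 2 / 2 := by
      rw [hB, div_pow, Real.sq_sqrt (by norm_num : (0:ℝ) ≤ 2)]
    rw [linkage_dsq, linkage_dsq] at h'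
    linear_combination h'
  have e3 : ((F₂ 0 - F₁ 0)+(B 0 - F₂ 0)-(A 0 - F₁ 0))^2 + ((F₂ 1 - F₁ 1)+(B 1 - F₂ 1)-(A 1 - F₁ 1))^2 = (F₂ 0 - F₁ 0)^2 + (F₂ 1 - F₁ 1)^2 := by
    have h' : dist A B ^ 2 = dist F₁ F₂ ^ 2 := by rw [hAB]
    rw [linkage_dsq, linkage_dsq] at h'
    linear_combination h'
  -- the line F₁F₂ is nondegenerate
  have hW : (F₂ 0 - F₁ 0)^2 + (F₂ 1 - F₁ 1)^2 ≠ 0 := by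
    intro h
    apply hF
    have h0 : dist F₁ F₂ ^ 2 = 0 := by rw [linkage_dsq]; linarith
    have := pow_eq_zero_iff (n := 2) (by norm_num) |>.mp h0
    exact dist_eq_zero.mp this
  -- unpack the opposite side hypothesis
  obtain ⟨⟨p₁, hp₁, p₂, hp₂, hray⟩, hAn, hBn⟩ := hSide
  have hane : ((F₂ 0 - F₁ 0)*(A 1 - F₁ 1) - (F₂ 1 - F₁ 1)*(A 0 - F₁ 0)) ≠ 0 := by
    intro h
    apply hAn
    apply linkage_mem_pair'
    refine ⟨((F₂ 0 - F₁ 0)*(A 0 - F₁ 0) + (F₂ 1 - F₁ 1)*(A 1 - F₁ 1))/((F₂ 0 - F₁ 0)^2+(F₂ 1 - F₁ 1)^2), fun i => ?_⟩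
    fin_cases i
    · show A 0 - F₁ 0 = _ * (F₂ 0 - F₁ 0)
      field_simp
      linear_combination (-(F₂ 1 - F₁ 1))*h
    · show A 1 - F₁ 1 = _ * (F₂ 1 - F₁ 1)
      field_simp
      linear_combination (F₂ 0 - F₁ 0)*h
  have hbne : ((F₂ 0 - F₁ 0)*(B 1 - F₂ 1) - (F₂ 1 - F₁ 1)*(B 0 - F₂ 0)) ≠ 0 := by
    intro h
    apply hBn
    apply linkage_mem_pair'
    refine ⟨((F₂ 0 - F₁ 0)*(B 0 - F₁ 0) + (F₂ 1 - F₁ 1)*(B 1 - F₁ 1))/((F₂ 0 - F₁ 0)^2+(F₂ 1 - F₁ 1)^2), fun i => ?_⟩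
    fin_cases i
    · show B 0 - F₁ 0 = _ * (F₂ 0 - F₁ 0)
      field_simp
      linear_combination (-(F₂ 1 - F₁ 1))*h
    · show B 1 - F₁ 1 = _ * (F₂ 1 - F₁ 1)
      field_simp
      linear_combination (F₂ 0 - F₁ 0)*h
  -- derive the opposite-sign condition
  obtain ⟨t₁, hq1⟩ := linkage_mem_pair hp₁
  obtain ⟨t₂, hq2⟩ := linkage_mem_pair hp₂
  have hab : ((F₂ 0 - F₁ 0)*(A 1 - F₁ 1) - (F₂ 1 - F₁ 1)*(A 0 - F₁ 0)) * ((F₂ 0 - F₁ 0)*(B 1 - F₂ 1) - (F₂ 1 - F₁ 1)*(B 0 - F₂ 0)) < 0 := by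
    rcases hray with h | h | ⟨r₁, r₂, hr₁, hr₂, hrr⟩
    · exact absurd (by rw [vsub_eq_zero_iff_eq.mp h]; exact hp₁) hAn
    · exact absurd (by rw [← vsub_eq_zero_iff_eq.mp h]; exact hp₂) hBn
    · have hrr0 : r₁ * (A 0 - p₁ 0) = r₂ * (p₂ 0 - B 0) := by
        have := congrArg (fun v => v 0) hrr
        simpa [vsub_eq_sub, PiLp.sub_apply, PiLp.smul_apply, smul_eq_mul] using this
      have hrr1 : r₁ * (A 1 - p₁ 1) = r₂ * (p₂ 1 - B 1) := by
        have := congrArg (fun v => v 1) hrr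
        simpa [vsub_eq_sub, PiLp.sub_apply, PiLp.smul_apply, smul_eq_mul] using this
      have heq : r₁ * ((F₂ 0 - F₁ 0)*(A 1 - F₁ 1) - (F₂ 1 - F₁ 1)*(A 0 - F₁ 0)) = r₂ * (-((F₂ 0 - F₁ 0)*(B 1 - F₂ 1) - (F₂ 1 - F₁ 1)*(B 0 - F₂ 0))) := by
        linear_combination (F₂ 0 - F₁ 0)*hrr1 - (F₂ 1 - F₁ 1)*hrr0 + r₁*(F₂ 0 - F₁ 0)*(hq1 1) - r₁*(F₂ 1 - F₁ 1)*(hq1 0)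
          + r₂*(F₂ 0 - F₁ 0)*(hq2 1) - r₂*(F₂ 1 - F₁ 1)*(hq2 0)
      have hb2 : 0 < ((F₂ 0 - F₁ 0)*(B 1 - F₂ 1) - (F₂ 1 - F₁ 1)*(B 0 - F₂ 0))^2 := lt_of_le_of_ne (sq_nonneg _) (Ne.symm (pow_ne_zero 2 hbne))
      have h3 : r₁ * ((F₂ 0 - F₁ 0)*(A 1 - F₁ 1) - (F₂ 1 - F₁ 1)*(A 0 - F₁ 0)) * ((F₂ 0 - F₁ 0)*(B 1 - F₂ 1) - (F₂ 1 - F₁ 1)*(B 0 - F₂ 0)) = (r₂ * (-((F₂ 0 - F₁ 0)*(B 1 - F₂ 1) - (F₂ 1 - F₁ 1)*(B 0 - F₂ 0)))) * ((F₂ 0 - F₁ 0)*(B 1 - F₂ 1) - (F₂ 1 - F₁ 1)*(B 0 - F₂ 0)) := by rw [heq]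
      by_contra hcon
      push_neg at hcon
      nlinarith [mul_pos hr₂ hb2, mul_nonneg hr₁.le hcon]
  -- unpack P on the two lines
  obtain ⟨t, htq⟩ := linkage_mem_pair hP₁
  obtain ⟨s, hsq⟩ := linkage_mem_pair hP₂
  have hsv1 : t*(A 0 - F₁ 0) - (F₂ 0 - F₁ 0) = s*(B 0 - F₂ 0) := by linear_combination (hsq 0) - (htq 0)
  have hsv2 : t*(A 1 - F₁ 1) - (F₂ 1 - F₁ 1) = s*(B 1 - F₂ 1) := by linear_combination (hsq 1) - (htq 1)
  -- apply the core algebraic lemma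
  obtain ⟨k, hF2eq, hPeq, hXeq⟩ :=
    linkage_core (F₂ 0 - F₁ 0) (F₂ 1 - F₁ 1) (A 0 - F₁ 0) (A 1 - F₁ 1) (B 0 - F₂ 0) (B 1 - F₂ 1) t s e1 e2 e3 hane hbne hab hsv1 hsv2
  -- the centre of the circle
  obtain ⟨C, hC0, hC1⟩ : ∃ C : EuclideanSpace ℝ (Fin 2),
      C 0 = F₁ 0 + ((F₂ 0 - F₁ 0)/2 - k*(F₂ 1 - F₁ 1)) ∧ C 1 = F₁ 1 + ((F₂ 1 - F₁ 1)/2 + k*(F₂ 0 - F₁ 0)) :=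
    ⟨!₂[F₁ 0 + ((F₂ 0 - F₁ 0)/2 - k*(F₂ 1 - F₁ 1)), F₁ 1 + ((F₂ 1 - F₁ 1)/2 + k*(F₂ 0 - F₁ 0))], by simp, by simp⟩
  have hX0 : X 0 = (A 0 + B 0)/2 := by
    rw [hX, midpoint_eq_smul_add]
    simp only [PiLp.smul_apply, PiLp.add_apply, smul_eq_mul]
    norm_num
    ring
  have hX1 : X 1 = (A 1 + B 1)/2 := by
    rw [hX, midpoint_eq_smul_add]
    simp only [PiLp.smul_apply, PiLp.add_apply, smul_eq_mul]
    norm_num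
    ring
  have hP0 : P 0 = F₁ 0 + t*(A 0 - F₁ 0) := by linarith [htq 0]
  have hP1' : P 1 = F₁ 1 + t*(A 1 - F₁ 1) := by linarith [htq 1]
  constructor
  · refine ⟨C, dist F₁ C, ?_⟩
    intro p hp
    simp only [Set.mem_insert_iff, Set.mem_singleton_iff] at hp
    rcases hp with rfl | rfl | rfl | rfl
    · refine linkage_eq_of_sq _ _ dist_nonneg dist_nonneg ?_
      rw [linkage_dsq, linkage_dsq, hC0, hC1, hP0, hP1']
      linear_combination hPeq
    · rfl
    · refine linkage_eq_of_sq _ _ dist_nonneg dist_nonneg ?_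
      rw [linkage_dsq, linkage_dsq, hC0, hC1, hX0, hX1]
      linear_combination hXeq
    · refine linkage_eq_of_sq _ _ dist_nonneg dist_nonneg ?_
      rw [linkage_dsq, linkage_dsq, hC0, hC1]
      linear_combination hF2eq
  · exact coplanar_of_finrank_eq_two _ finrank_euclideanSpace_fin
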